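/- Every #-decreasing well ordered function assignment has a unique direct completion. That is, if (X^k, ≤, U) is a linearly ordered function assignment with ≤ a well ordering and U #-decreasing with respect to the sup norm of ≤, then there is exactly one function f: X^k → X^k such that for every finite A ⊆ X^k there exists a finite B ⊇ A with the graph of U(B) contained in f. -/

import Mathlib

set_option linter.unusedSectionVars false


/-- A function assignment for `α`: to each finite `A ⊆ α` it assigns a
function from `A` to `A` (values outside `A` are irrelevant). A linearly
ordered function assignment on `X^k` is a `FunAssign (Fin k → X)` together
with the ambient `LinearOrder X`. -/
structure FunAssign (α : Type*) where
  U : Finset α → α → α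
  maps : ∀ A : Finset α, ∀ x ∈ A, U A x ∈ A

/-- The sup norm `|x|` of `x ∈ X^k`, `k > 0`. -/
def vmax {X : Type*} [LinearOrder X] {k : ℕ} (hk : 0 < k) (x : Fin k → X) : X :=
  Finset.univ.sup' (Finset.univ_nonempty_iff.mpr ⟨⟨0, hk⟩⟩) x

/-- A linearly ordered function assignment is #-decreasing: inserting a point
`x` either extends the function or makes it drop (in sup norm) at some point
of sup norm `> |x|`. -/
def SharpDecreasingLofa {X : Type*} [LinearOrder X] {k : ℕ} (hk : 0 < k)
    (L : FunAssign (Fin k → X)) : Prop :=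
  ∀ (A : Finset (Fin k → X)) (x : Fin k → X),
    (∀ y ∈ A, L.U A y = L.U (insert x A) y) ∨
    ∃ y ∈ A, vmax hk x < vmax hk y ∧
      vmax hk (L.U (insert x A) y) < vmax hk (L.U A y)

/-- `f : X^k → X^k` is a direct completion of `L`: every finite `A ⊆ X^k` has
a finite superset `B` with the graph of `L.U B` contained in `f`. -/
def IsDirectCompletion {X : Type*} [LinearOrder X] {k : ℕ}
    (L : FunAssign (Fin k → X)) (f : (Fin k → X) → (Fin k → X)) : Prop :=
  ∀ A : Finset (Fin k → X), ∃ B : Finset (Fin k → X), A ⊆ B ∧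
    ∀ x ∈ B, f x = L.U B x

section Dev

variable {X : Type*} [LinearOrder X] [WellFoundedLT X] {β : Type*} [DecidableEq β]

variable (nv : β → X) (L : FunAssign β)

/-- slice: elements of norm `< w`. -/
def slc (A : Finset β) (w : X) : Finset β := A.filter (fun a => nv a < w)

lemma mem_slc {A : Finset β} {w : X} {a : β} : a ∈ slc nv A w ↔ a ∈ A ∧ nv a < w := by
  simp [slc]

lemma slc_subset (A : Finset β) (w : X) : slc nv A w ⊆ A := Finset.filter_subset _ _

lemma slc_mono {A B : Finset β} (h : A ⊆ B) (w : X) : slc nv A w ⊆ slc nv B w :=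
  Finset.filter_subset_filter _ h

lemma slc_slc (A : Finset β) {w w' : X} (h : w' ≤ w) : slc nv (slc nv A w) w' = slc nv A w' := by
  ext a
  simp only [mem_slc]
  constructor
  · rintro ⟨⟨ha, _⟩, h2⟩; exact ⟨ha, h2⟩
  · rintro ⟨ha, h2⟩; exact ⟨⟨ha, lt_of_lt_of_le h2 h⟩, h2⟩

/-- `A` is `f`-closed: `U(A)` agrees with `f` on `A`. -/
def Fc (f : β → β) (A : Finset β) : Prop := ∀ e ∈ A, L.U A e = f e

def prefixOf (S P : Finset β) : Prop := P ⊆ S ∧ ∀ d ∈ P, ∀ e ∈ S, nv e < nv d → e ∈ P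

lemma slc_insert_of_not_lt {x : β} {w : X} (h : ¬ nv x < w) (A : Finset β) :
    slc nv (insert x A) w = slc nv A w := by
  simp only [slc, Finset.filter_insert, if_neg h]

lemma slc_insert_of_lt {x : β} {w : X} (h : nv x < w) (A : Finset β) :
    slc nv (insert x A) w = insert x (slc nv A w) := by
  simp only [slc, Finset.filter_insert, if_pos h]

variable (hsharp : ∀ (A : Finset β) (x : β), (∀ y ∈ A, L.U A y = L.U (insert x A) y) ∨
    ∃ y ∈ A, nv x < nv y ∧ nv (L.U (insert x A) y) < nv (L.U A y))

include hsharp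

/-- Reduction lemma: the value at `y` only depends on the points of norm `< nv y`. -/
lemma red : ∀ (A : Finset β), ∀ y ∈ A, L.U A y = L.U (insert y (slc nv A (nv y))) y := by
  intro A
  induction A using Finset.strongInductionOn with
  | _ A ih =>
    intro y hy
    by_cases hA : A ⊆ insert y (slc nv A (nv y))
    · have : A = insert y (slc nv A (nv y)) := by
        apply Finset.Subset.antisymm hA
        intro a ha
        rcases Finset.mem_insert.mp ha with h | h
        · rwa [h]
        · exact slc_subset nv A (nv y) h
      rw [← this]
    · -- there is d ∈ A, d ≠ y, ¬ nv d < nv y ; pick one with maximal norm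
      have hne : (A.filter (fun a => ¬ (a = y ∨ nv a < nv y))).Nonempty := by
        rw [Finset.filter_nonempty_iff]
        by_contra hcon
        push_neg at hcon
        apply hA
        intro a ha
        rcases Classical.em (a = y ∨ nv a < nv y) with h | h
        · rcases h with h | h
          · exact Finset.mem_insert.mpr (Or.inl h)
          · exact Finset.mem_insert.mpr (Or.inr ((mem_slc nv).mpr ⟨ha, h⟩))
        · exact absurd (hcon a ha) (by simpa using h)
      obtain ⟨d, hdmem, hdmax⟩ := Finset.exists_max_image _ nv hne
      rw [Finset.mem_filter] at hdmem
      obtain ⟨hdA, hdprop⟩ := hdmem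
      push_neg at hdprop
      obtain ⟨hdne, hdge⟩ := hdprop
      -- d has maximal norm in A
      have hmax : ∀ a ∈ A, nv a ≤ nv d := by
        intro a ha
        rcases Classical.em (a = y ∨ nv a < nv y) with h | h
        · rcases h with h | h
          · rw [h]; exact hdge
          · exact le_of_lt (lt_of_lt_of_le h hdge)
        · exact hdmax a (Finset.mem_filter.mpr ⟨ha, by simpa using h⟩)
      have hins : insert d (A.erase d) = A := Finset.insert_erase hdA
      have hext : ∀ z ∈ A.erase d, L.U (A.erase d) z = L.U A z := by
        intro z hz
        rcases hsharp (A.erase d) d with h | h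
        · rw [h z hz, hins]
        · exfalso
          obtain ⟨w, hw, hw2, _⟩ := h
          exact absurd (hmax w (Finset.mem_of_mem_erase hw)) (not_le.mpr hw2)
      have hyA' : y ∈ A.erase d := Finset.mem_erase.mpr ⟨fun h => hdne h.symm, hy⟩
      have hslc : slc nv (A.erase d) (nv y) = slc nv A (nv y) := by
        ext a
        simp only [mem_slc, Finset.mem_erase]
        constructor
        · rintro ⟨⟨_, ha⟩, h2⟩; exact ⟨ha, h2⟩
        · rintro ⟨ha, h2⟩
          refine ⟨⟨fun had => ?_, ha⟩, h2⟩
          subst had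
          exact absurd h2 (not_lt.mpr hdge)
      calc L.U A y = L.U (A.erase d) y := (hext y hyA').symm
    _ = L.U (insert y (slc nv (A.erase d) (nv y))) y :=
          ih (A.erase d) (Finset.erase_ssubset hdA) y hyA'
    _ = L.U (insert y (slc nv A (nv y))) y := by rw [hslc]


lemma fc_slc {f : β → β} {A : Finset β} (hA : Fc L f A) (w : X) : Fc L f (slc nv A w) := by
  intro e he
  obtain ⟨heA, hew⟩ := (mem_slc nv).mp he
  have r1 := red nv L hsharp (slc nv A w) e he
  rw [slc_slc nv A (le_of_lt hew)] at r1
  rw [r1, ← red nv L hsharp A e heA]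
  exact hA e heA

/-- Pinning: a point of an `f`-closed set keeps its value when a higher point is adjoined. -/
lemma pin {f : β → β} {A : Finset β} (hA : Fc L f A) {z : β} (hz : z ∈ A) {p : β}
    (hzp : ¬ nv p < nv z) : L.U (insert p A) z = f z := by
  have r1 := red nv L hsharp (insert p A) z (Finset.mem_insert_of_mem hz)
  rw [slc_insert_of_not_lt nv hzp A] at r1
  rw [r1, ← red nv L hsharp A z hz]
  exact hA z hz

/-- Monotonicity along nested closed sets: the value at `p` can only drop. -/
lemma mono (f : β → β) (p : β) (B₁ : Finset β) :
    ∀ n (B₂ : Finset β), (B₂ \ B₁).card = n → B₁ ⊆ B₂ → Fc L f B₁ → Fc L f B₂ →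
    (∀ P, prefixOf nv (B₂ \ B₁) P → Fc L f (B₁ ∪ P)) →
    (∀ e ∈ B₂, nv e < nv p) →
    nv (L.U (insert p B₂) p) ≤ nv (L.U (insert p B₁) p) ∧
      (L.U (insert p B₂) p ≠ L.U (insert p B₁) p →
        nv (L.U (insert p B₂) p) < nv (L.U (insert p B₁) p)) := by
  intro n
  induction n using Nat.strong_induction_on with
  | _ n ih =>
    intro B₂ hcard hsub h1 h2 hQ hlow
    by_cases hn0 : B₂ \ B₁ = ∅
    · have hBeq : B₂ = B₁ :=
        Finset.Subset.antisymm (Finset.sdiff_eq_empty_iff_subset.mp hn0) hsub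
      rw [hBeq]
      exact ⟨le_refl _, fun h => absurd rfl h⟩
    · obtain ⟨d, hdmem, hdmax⟩ :=
        Finset.exists_max_image (B₂ \ B₁) nv (Finset.nonempty_iff_ne_empty.mpr hn0)
      obtain ⟨hdB₂, hdnB₁⟩ := Finset.mem_sdiff.mp hdmem
      set B₂' := B₂.erase d with hB₂'
      have hsub' : B₁ ⊆ B₂' := fun x hx =>
        Finset.mem_erase.mpr ⟨fun h => hdnB₁ (h ▸ hx), hsub hx⟩
      have hsdiff' : B₂' \ B₁ = (B₂ \ B₁).erase d := by
        ext a
        simp only [Finset.mem_sdiff, Finset.mem_erase, hB₂']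
        tauto
      have hnpos : n ≠ 0 := by
        intro h
        rw [h, Finset.card_eq_zero] at hcard
        exact hn0 hcard
      have hcard' : (B₂' \ B₁).card = n - 1 := by
        rw [hsdiff', Finset.card_erase_of_mem hdmem, hcard]
      -- prefix transfer
      have hpref : ∀ P, prefixOf nv (B₂' \ B₁) P → prefixOf nv (B₂ \ B₁) P := by
        intro P ⟨hPs, hPdc⟩
        refine ⟨hPs.trans (by rw [hsdiff']; exact Finset.erase_subset _ _), ?_⟩
        intro d' hsharp' e he hlt
        have hsharp'mem : d' ∈ B₂' \ B₁ := hPs hsharp'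
        have hsharp'le : nv d' ≤ nv d := hdmax d' (by rw [hsdiff'] at hsharp'mem; exact Finset.mem_of_mem_erase hsharp'mem)
        have hed : e ≠ d := by
          intro h
          subst h
          exact absurd (lt_of_lt_of_le hlt hsharp'le) (lt_irrefl _)
        refine hPdc d' hsharp' e ?_ hlt
        rw [hsdiff']
        exact Finset.mem_erase.mpr ⟨hed, he⟩
      have hQ' : ∀ P, prefixOf nv (B₂' \ B₁) P → Fc L f (B₁ ∪ P) := fun P hP => hQ P (hpref P hP)
      have hFcB₂' : Fc L f B₂' := by
        have hpfx : prefixOf nv (B₂ \ B₁) ((B₂ \ B₁).erase d) := by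
          refine ⟨Finset.erase_subset _ _, ?_⟩
          intro d' hsharp' e he hlt
          have hsharp'le : nv d' ≤ nv d := hdmax d' (Finset.mem_of_mem_erase hsharp')
          have hed : e ≠ d := by
            intro h
            subst h
            exact absurd (lt_of_lt_of_le hlt hsharp'le) (lt_irrefl _)
          exact Finset.mem_erase.mpr ⟨hed, he⟩
        have := hQ _ hpfx
        have hun : B₁ ∪ (B₂ \ B₁).erase d = B₂' := by
          ext a
          simp only [Finset.mem_union, Finset.mem_erase, Finset.mem_sdiff, hB₂']
          constructor
          · rintro (h | ⟨h1', h2', h3'⟩)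
            · exact ⟨fun hh => hdnB₁ (hh ▸ h), hsub h⟩
            · exact ⟨h1', h2'⟩
          · rintro ⟨h1', h2'⟩
            by_cases hB : a ∈ B₁
            · exact Or.inl hB
            · exact Or.inr ⟨h1', h2', hB⟩
        rwa [hun] at this
      have hlow' : ∀ e ∈ B₂', nv e < nv p := fun e he => hlow e (Finset.mem_of_mem_erase he)
      have ihres := ih (n-1) (Nat.pred_lt hnpos) B₂' hcard' hsub' h1 hFcB₂' hQ' hlow'
      have hdnotmem : d ∉ insert p B₂' := by
        rw [hB₂']
        simp only [Finset.mem_insert, Finset.mem_erase]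
        rintro (h | ⟨h1', _⟩)
        · exact absurd (hlow d hdB₂) (by rw [h]; exact lt_irrefl _)
        · exact h1' rfl
      have hkey : insert d (insert p B₂') = insert p B₂ := by
        rw [Finset.insert_comm, Finset.insert_erase hdB₂]
      rcases hsharp (insert p B₂') d with hext | hdrop
      · have hpeq := hext p (Finset.mem_insert_self _ _)
        rw [hkey] at hpeq
        rw [← hpeq]
        exact ihres
      · obtain ⟨w, hw, hwlt, hwdrop⟩ := hdrop
        rw [hkey] at hwdrop
        rcases Finset.mem_insert.mp hw with hwp | hwB
        · subst hwp
          have hlt2 := lt_of_lt_of_le hwdrop ihres.1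
          exact ⟨le_of_lt hlt2, fun _ => hlt2⟩
        · exfalso
          have hc1 : L.U (insert p B₂') w = f w :=
            pin nv L hsharp hFcB₂' hwB (not_lt.mpr (le_of_lt (hlow' w hwB)))
          have hc2 : L.U (insert p B₂) w = f w :=
            pin nv L hsharp h2 (Finset.mem_of_mem_erase hwB) (not_lt.mpr (le_of_lt (hlow' w hwB)))
          rw [hc1, hc2] at hwdrop
          exact absurd hwdrop (lt_irrefl _)

lemma monoEq (f : β → β) (p : β) {B₁ B₂ P' : Finset β}
    (hQbig : ∀ P, prefixOf nv (B₂ \ B₁) P → Fc L f (B₁ ∪ P))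
    (hsub : B₁ ⊆ B₂) (h1 : Fc L f B₁) (h2 : Fc L f B₂)
    (hlow : ∀ e ∈ B₂, nv e < nv p)
    (heq : L.U (insert p B₂) p = L.U (insert p B₁) p)
    (hP' : prefixOf nv (B₂ \ B₁) P') :
    L.U (insert p (B₁ ∪ P')) p = L.U (insert p B₁) p := by
  have hdisj : ∀ x ∈ P', x ∉ B₁ := fun x hx => (Finset.mem_sdiff.mp (hP'.1 hx)).2
  have hP'B₂ : P' ⊆ B₂ := hP'.1.trans (Finset.sdiff_subset)
  have hsubP : B₁ ∪ P' ⊆ B₂ := Finset.union_subset hsub hP'B₂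
  have hFcP : Fc L f (B₁ ∪ P') := hQbig P' hP'
  have hsd1 : (B₁ ∪ P') \ B₁ = P' := by
    ext a
    simp only [Finset.mem_sdiff, Finset.mem_union]
    constructor
    · rintro ⟨h | h, hn⟩
      · exact absurd h hn
      · exact h
    · intro h
      exact ⟨Or.inr h, hdisj a h⟩
  have hQ1 : ∀ P, prefixOf nv ((B₁ ∪ P') \ B₁) P → Fc L f (B₁ ∪ P) := by
    intro P hP
    rw [hsd1] at hP
    refine hQbig P ⟨hP.1.trans hP'.1, ?_⟩
    intro d hdP e he hlt
    have heP' : e ∈ P' := hP'.2 d (hP.1 hdP) e he hlt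
    exact hP.2 d hdP e heP' hlt
  have m1 := mono nv L hsharp f p B₁ ((B₁ ∪ P') \ B₁).card (B₁ ∪ P') rfl
    Finset.subset_union_left h1 hFcP hQ1 (fun e he => hlow e (hsubP he))
  have hQ2 : ∀ P, prefixOf nv (B₂ \ (B₁ ∪ P')) P → Fc L f ((B₁ ∪ P') ∪ P) := by
    intro P hP
    rw [Finset.union_assoc]
    refine hQbig (P' ∪ P) ⟨Finset.union_subset hP'.1 (hP.1.trans (Finset.sdiff_subset_sdiff (le_refl _) Finset.subset_union_left)), ?_⟩
    intro d hdU e he hlt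
    rcases Finset.mem_union.mp hdU with hdP' | hdP
    · exact Finset.mem_union_left _ (hP'.2 d hdP' e he hlt)
    · by_cases heP' : e ∈ P'
      · exact Finset.mem_union_left _ heP'
      · have heB : e ∈ B₂ \ (B₁ ∪ P') := by
          obtain ⟨he1, he2⟩ := Finset.mem_sdiff.mp he
          exact Finset.mem_sdiff.mpr ⟨he1, fun hc =>
            (Finset.mem_union.mp hc).elim he2 heP'⟩
        exact Finset.mem_union_right _ (hP.2 d hdP e heB hlt)
  have m2 := mono nv L hsharp f p (B₁ ∪ P') (B₂ \ (B₁ ∪ P')).card B₂ rfl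
    hsubP hFcP h2 hQ2 hlow
  by_contra hne
  have hlt1 := m1.2 hne
  have h21 := m2.1
  rw [heq] at h21
  exact absurd (lt_of_le_of_lt h21 hlt1) (lt_irrefl _)

lemma Qp (f : β → β) : ∀ n (A₂ : Finset β), A₂.card ≤ n → Fc L f A₂ →
    ∀ (A₁ : Finset β), A₁ ⊆ A₂ → Fc L f A₁ →
    ∀ P, prefixOf nv (A₂ \ A₁) P → Fc L f (A₁ ∪ P) := by
  intro n
  induction n using Nat.strong_induction_on with
  | _ n ih =>
    intro A₂ hc h2 A₁ hsub h1 P hP e he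
    have hPA₂ : P ⊆ A₂ := hP.1.trans (Finset.sdiff_subset)
    have heA₂ : e ∈ A₂ := (Finset.union_subset hsub hPA₂) he
    by_cases hcase : ∀ x ∈ A₂ \ A₁, nv x < nv e → x ∈ P
    · have hseq : slc nv (A₁ ∪ P) (nv e) = slc nv A₂ (nv e) := by
        ext a
        simp only [mem_slc, Finset.mem_union]
        constructor
        · rintro ⟨h | h, hlt⟩
          · exact ⟨hsub h, hlt⟩
          · exact ⟨hPA₂ h, hlt⟩
        · rintro ⟨ha, hlt⟩
          by_cases hB : a ∈ A₁
          · exact ⟨Or.inl hB, hlt⟩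
          · exact ⟨Or.inr (hcase a (Finset.mem_sdiff.mpr ⟨ha, hB⟩) hlt), hlt⟩
      rw [red nv L hsharp (A₁ ∪ P) e he, hseq, ← red nv L hsharp A₂ e heA₂]
      exact h2 e heA₂
    · push_neg at hcase
      obtain ⟨e₀, he₀, he₀lt, he₀P⟩ := hcase
      have heA₁ : e ∈ A₁ := by
        rcases Finset.mem_union.mp he with h | h
        · exact h
        · exact absurd (hP.2 e h e₀ he₀ he₀lt) he₀P
      have hn0 : n ≠ 0 := by
        intro h
        rw [h, Nat.le_zero, Finset.card_eq_zero] at hc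
        rw [hc] at heA₂
        exact absurd heA₂ (Finset.notMem_empty e)
      have hB₂sub : slc nv A₂ (nv e) ⊆ A₂.erase e := by
        intro x hx
        obtain ⟨hx1, hx2⟩ := (mem_slc nv).mp hx
        exact Finset.mem_erase.mpr ⟨fun h => absurd (h ▸ hx2) (lt_irrefl _), hx1⟩
      have hcard2 : (slc nv A₂ (nv e)).card ≤ n - 1 := by
        calc (slc nv A₂ (nv e)).card ≤ (A₂.erase e).card := Finset.card_le_card hB₂sub
        _ = A₂.card - 1 := Finset.card_erase_of_mem heA₂
        _ ≤ n - 1 := Nat.sub_le_sub_right hc 1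
      have hB₂Fc := fc_slc nv L hsharp h2 (nv e)
      have hB₁Fc := fc_slc nv L hsharp h1 (nv e)
      have hsubB : slc nv A₁ (nv e) ⊆ slc nv A₂ (nv e) := slc_mono nv hsub _
      have hQbig : ∀ Q, prefixOf nv (slc nv A₂ (nv e) \ slc nv A₁ (nv e)) Q →
          Fc L f (slc nv A₁ (nv e) ∪ Q) := by
        intro Q hQ
        exact ih (n-1) (Nat.pred_lt hn0) (slc nv A₂ (nv e)) hcard2 hB₂Fc
          (slc nv A₁ (nv e)) hsubB hB₁Fc Q hQ
      have hlowB : ∀ x ∈ slc nv A₂ (nv e), nv x < nv e := fun x hx => ((mem_slc nv).mp hx).2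
      have heq : L.U (insert e (slc nv A₂ (nv e))) e = L.U (insert e (slc nv A₁ (nv e))) e := by
        rw [← red nv L hsharp A₂ e heA₂, ← red nv L hsharp A₁ e heA₁,
          h2 e heA₂, h1 e heA₁]
      have hP'' : prefixOf nv (slc nv A₂ (nv e) \ slc nv A₁ (nv e)) (slc nv P (nv e)) := by
        constructor
        · intro x hx
          obtain ⟨hx1, hx2⟩ := (mem_slc nv).mp hx
          have hxs := Finset.mem_sdiff.mp (hP.1 hx1)
          refine Finset.mem_sdiff.mpr ⟨(mem_slc nv).mpr ⟨hxs.1, hx2⟩, fun hc' => ?_⟩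
          exact hxs.2 ((mem_slc nv).mp hc').1
        · intro d hdP y hy hlt
          obtain ⟨hd1, hd2⟩ := (mem_slc nv).mp hdP
          obtain ⟨hy1, hy2⟩ := Finset.mem_sdiff.mp hy
          obtain ⟨hy3, hy4⟩ := (mem_slc nv).mp hy1
          have hyA₁ : y ∉ A₁ := fun hc' => hy2 ((mem_slc nv).mpr ⟨hc', hy4⟩)
          have hyP : y ∈ P := hP.2 d hd1 y (Finset.mem_sdiff.mpr ⟨hy3, hyA₁⟩) hlt
          exact (mem_slc nv).mpr ⟨hyP, hy4⟩
      have hres := monoEq nv L hsharp f e hQbig hsubB hB₁Fc hB₂Fc hlowB heq hP''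
      have hslice : slc nv (A₁ ∪ P) (nv e) = slc nv A₁ (nv e) ∪ slc nv P (nv e) :=
        Finset.filter_union _ _ _
      rw [red nv L hsharp (A₁ ∪ P) e he, hslice, hres, ← red nv L hsharp A₁ e heA₁]
      exact h1 e heA₁

omit hsharp in
lemma famly_nonempty (p : β) (g : β → β) :
    ∃ E : Finset β, (∀ e ∈ E, nv e < nv p) ∧ ∀ e ∈ E, L.U E e = g e :=
  ⟨∅, fun e he => absurd he (Finset.notMem_empty e),
      fun e he => absurd he (Finset.notMem_empty e)⟩

omit hsharp in
lemma exists_pick (p : β) (g : β → β) :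
    ∃ E : Finset β, ((∀ e ∈ E, nv e < nv p) ∧ ∀ e ∈ E, L.U E e = g e) ∧
      ∀ E' : Finset β, ((∀ e ∈ E', nv e < nv p) ∧ ∀ e ∈ E', L.U E' e = g e) →
        nv (L.U (insert p E) p) ≤ nv (L.U (insert p E') p) := by
  set T : Set X := (fun E : Finset β => nv (L.U (insert p E) p)) ''
    {E : Finset β | (∀ e ∈ E, nv e < nv p) ∧ ∀ e ∈ E, L.U E e = g e} with hT
  have hTne : T.Nonempty := by
    obtain ⟨E, h1, h2⟩ := famly_nonempty nv L p g
    exact ⟨_, ⟨E, ⟨h1, h2⟩, rfl⟩⟩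
  have hmem := WellFounded.min_mem wellFounded_lt T hTne
  obtain ⟨E, hE, hEeq⟩ := hmem
  refine ⟨E, hE, ?_⟩
  intro E' hE'
  have h2 : nv (L.U (insert p E) p) = wellFounded_lt.min T hTne := hEeq
  have h1 : ¬ (nv (L.U (insert p E') p) < wellFounded_lt.min T hTne) :=
    WellFounded.not_lt_min wellFounded_lt T
      (Set.mem_image_of_mem _ (hE' : E' ∈ {E : Finset β | _}))
  rw [h2]
  exact not_lt.mp h1

omit hsharp in
/-- chosen minimizing closed set for `p` relative to `g` on lower points -/
noncomputable def pickE (p : β) (g : β → β) : Finset β :=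
  Classical.choose (exists_pick nv L p g)

omit hsharp in
lemma pickE_spec (p : β) (g : β → β) :
    ((∀ e ∈ pickE nv L p g, nv e < nv p) ∧ ∀ e ∈ pickE nv L p g, L.U (pickE nv L p g) e = g e) ∧
      ∀ E' : Finset β, ((∀ e ∈ E', nv e < nv p) ∧ ∀ e ∈ E', L.U E' e = g e) →
        nv (L.U (insert p (pickE nv L p g)) p) ≤ nv (L.U (insert p E') p) :=
  Classical.choose_spec (exists_pick nv L p g)

omit hsharp in
/-- the direct completion function, by recursion on the norm -/
noncomputable def fdc : β → β :=
  (InvImage.wf nv wellFounded_lt).fix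
    (fun p g => L.U (insert p (pickE nv L p
      (fun q => if h : nv q < nv p then g q h else q))) p)

omit hsharp in
noncomputable def Estar (p : β) : Finset β :=
  pickE nv L p (fun q => if _ : nv q < nv p then fdc nv L q else q)

omit hsharp in
lemma fdc_eq (p : β) : fdc nv L p = L.U (insert p (Estar nv L p)) p := by
  show (InvImage.wf nv wellFounded_lt).fix _ p = _
  rw [WellFounded.fix_eq]
  rfl

omit hsharp in
lemma Estar_low (p : β) : ∀ e ∈ Estar nv L p, nv e < nv p :=
  (pickE_spec nv L p _).1.1

omit hsharp in
lemma Estar_fc (p : β) : Fc L (fdc nv L) (Estar nv L p) := by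
  intro e he
  have h := (pickE_spec nv L p _).1.2 e he
  rwa [dif_pos (Estar_low nv L p e he)] at h

omit hsharp in
lemma Estar_min (p : β) : ∀ E : Finset β, (∀ e ∈ E, nv e < nv p) → Fc L (fdc nv L) E →
    nv (fdc nv L p) ≤ nv (L.U (insert p E) p) := by
  intro E hlow hFc
  rw [fdc_eq]
  refine (pickE_spec nv L p _).2 E ⟨hlow, ?_⟩
  intro e he
  rw [dif_pos (hlow e he)]
  exact hFc e he

lemma inv1F (p : β) (E : Finset β) (hFc : Fc L (fdc nv L) E)
    (hlow : ∀ e ∈ E, nv e < nv p) (hsubst : Estar nv L p ⊆ E) :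
    L.U (insert p E) p = fdc nv L p := by
  have hQ : ∀ P, prefixOf nv (E \ Estar nv L p) P → Fc L (fdc nv L) (Estar nv L p ∪ P) :=
    fun P hP => Qp nv L hsharp (fdc nv L) E.card E (le_refl _) hFc (Estar nv L p) hsubst
      (Estar_fc nv L p) P hP
  have m := mono nv L hsharp (fdc nv L) p (Estar nv L p) (E \ Estar nv L p).card E rfl
    hsubst (Estar_fc nv L p) hFc hQ hlow
  have hmin := Estar_min nv L p E hlow hFc
  rw [fdc_eq]
  by_contra hne
  have hlt := m.2 (by rw [← fdc_eq] at hne ⊢; exact fun h => hne (h ▸ rfl))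
  rw [← fdc_eq] at hlt
  exact absurd (lt_of_le_of_lt hmin hlt) (lt_irrefl _)

def sclosed (B : Finset β) : Prop := ∀ e ∈ B, Estar nv L e ⊆ B

lemma sclosed_fc : ∀ (e : β) (B : Finset β), sclosed nv L B → e ∈ B → L.U B e = fdc nv L e := by
  intro e
  induction e using (InvImage.wf nv wellFounded_lt).induction with
  | _ x ihx =>
    intro B hscl hxB
    have hred := red nv L hsharp B x hxB
    have hSs : ∀ q ∈ slc nv B (nv x), q ∈ B ∧ nv q < nv x := fun q hq => (mem_slc nv).mp hq
    have hSscl : sclosed nv L (slc nv B (nv x)) := by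
      intro q hq r hr
      obtain ⟨hqB, hqlt⟩ := hSs q hq
      have hrB : r ∈ B := hscl q hqB hr
      exact (mem_slc nv).mpr ⟨hrB, lt_trans (Estar_low nv L q r hr) hqlt⟩
    have hSFc : Fc L (fdc nv L) (slc nv B (nv x)) := by
      intro q hq
      exact ihx q (hSs q hq).2 _ hSscl hq
    have hElow : Estar nv L x ⊆ slc nv B (nv x) := by
      intro r hr
      exact (mem_slc nv).mpr ⟨hscl x hxB hr, Estar_low nv L x r hr⟩
    rw [hred, inv1F nv L hsharp x (slc nv B (nv x)) hSFc (fun q hq => (hSs q hq).2) hElow]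

omit hsharp in
/-- support closure of a point -/
noncomputable def scl : β → Finset β :=
  (InvImage.wf nv wellFounded_lt).fix
    (fun p g => insert p ((Estar nv L p).attach.biUnion
      (fun q => g q.1 (Estar_low nv L p q.1 q.2))))

omit hsharp in
lemma scl_eq (p : β) : scl nv L p = insert p ((Estar nv L p).attach.biUnion
    (fun q => scl nv L q.1)) := by
  show (InvImage.wf nv wellFounded_lt).fix _ p = _
  rw [WellFounded.fix_eq]
  rfl

omit hsharp in
lemma mem_scl_self (p : β) : p ∈ scl nv L p := by
  rw [scl_eq nv L p]
  exact Finset.mem_insert_self _ _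

omit hsharp in
lemma scl_sub (p : β) : ∀ q ∈ Estar nv L p, scl nv L q ⊆ scl nv L p := by
  intro q hq
  rw [scl_eq nv L p]
  exact Finset.Subset.trans
    (Finset.subset_biUnion_of_mem (fun r => scl nv L r.1) (Finset.mem_attach _ ⟨q, hq⟩))
    (Finset.subset_insert _ _)

omit hsharp in
lemma scl_trans : ∀ (p : β), ∀ e ∈ scl nv L p, scl nv L e ⊆ scl nv L p := by
  intro p
  induction p using (InvImage.wf nv wellFounded_lt).induction with
  | _ x ihx =>
    intro e he
    rw [scl_eq nv L x] at he
    rcases Finset.mem_insert.mp he with h | h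
    · subst h; exact Finset.Subset.refl _
    · obtain ⟨q, _, hq2⟩ := Finset.mem_biUnion.mp h
      exact (ihx q.1 (Estar_low nv L x q.1 q.2) e hq2).trans (scl_sub nv L x q.1 q.2)

omit hsharp in
lemma sclosed_scl_biUnion (A : Finset β) : sclosed nv L (A.biUnion (scl nv L)) := by
  intro e he r hr
  obtain ⟨a, haA, hea⟩ := Finset.mem_biUnion.mp he
  have h1 : Estar nv L e ⊆ scl nv L e := by
    intro q hq
    exact scl_sub nv L e q hq (mem_scl_self nv L q)
  have h2 : scl nv L e ⊆ scl nv L a := scl_trans nv L a e hea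
  exact Finset.mem_biUnion.mpr ⟨a, haA, h2 (h1 hr)⟩

lemma fdc_completion : ∀ A : Finset β, ∃ B : Finset β, A ⊆ B ∧
    ∀ x ∈ B, fdc nv L x = L.U B x := by
  intro A
  refine ⟨A.biUnion (scl nv L), ?_, ?_⟩
  · intro a ha
    exact Finset.mem_biUnion.mpr ⟨a, ha, mem_scl_self nv L a⟩
  · intro x hx
    exact (sclosed_fc nv L hsharp x _ (sclosed_scl_biUnion nv L A) hx).symm

lemma fdc_unique (g : β → β) (hg : ∀ A : Finset β, ∃ B : Finset β, A ⊆ B ∧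
    ∀ x ∈ B, g x = L.U B x) : ∀ x, g x = fdc nv L x := by
  intro x
  induction x using (InvImage.wf nv wellFounded_lt).induction with
  | _ x ihx =>
    obtain ⟨C, hC1, hC2⟩ := hg (scl nv L x)
    have hxC : x ∈ C := hC1 (mem_scl_self nv L x)
    have hgx : g x = L.U C x := hC2 x hxC
    have hred := red nv L hsharp C x hxC
    have hE'Fc : Fc L (fdc nv L) (slc nv C (nv x)) := by
      intro q hq
      obtain ⟨hqC, hqlt⟩ := (mem_slc nv).mp hq
      have e1 : L.U (slc nv C (nv x)) q = L.U C q := by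
        rw [red nv L hsharp (slc nv C (nv x)) q hq, slc_slc nv C (le_of_lt hqlt),
          ← red nv L hsharp C q hqC]
      rw [e1, ← hC2 q hqC]
      exact ihx q hqlt
    have hEsub : Estar nv L x ⊆ slc nv C (nv x) := by
      intro r hr
      have h1 : Estar nv L x ⊆ scl nv L x := fun q hq =>
        scl_sub nv L x q hq (mem_scl_self nv L q)
      exact (mem_slc nv).mpr ⟨hC1 (h1 hr), Estar_low nv L x r hr⟩
    have := inv1F nv L hsharp x (slc nv C (nv x)) hE'Fc
      (fun q hq => ((mem_slc nv).mp hq).2) hEsub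
    rw [hgx, hred, this]

end Dev

/-- Theorem 4.8: every #-decreasing well ordered function assignment has a
unique direct completion. -/
theorem stmt_14 {X : Type*} [LinearOrder X] [WellFoundedLT X] (k : ℕ)
    (hk : 0 < k) (L : FunAssign (Fin k → X))
    (hdec : SharpDecreasingLofa hk L) :
    ∃! f : (Fin k → X) → (Fin k → X), IsDirectCompletion L f := by
  refine ⟨fdc (vmax hk) L, ?_, ?_⟩
  · exact fdc_completion (vmax hk) L hdec
  · intro g hg
    funext x
    exact fdc_unique (vmax hk) L hdec g hg x
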